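/- Assume in addition that A is three times continuously differentiable. There exists a constant C > 0, depending only on n, α, and on A and f (through the sup-norms of themselves and their derivatives up to third order), and independent of ε_1, …, ε_n, such that for k = 0, 1, 2, 3, each i and every x ∈ [0,1]: |v_i^{(k)}(x)| ≤ C · (1 + ε_i^{1−k/2}). -/

import Mathlib

open Set Filter Topology

private lemma iter2 (g : ℝ → ℝ) : iteratedDeriv 2 g = deriv (deriv g) := by
  rw [show (2:ℕ) = 1+1 from rfl, iteratedDeriv_succ, iteratedDeriv_one]

private lemma iter3 (g : ℝ → ℝ) : iteratedDeriv 3 g = deriv (deriv (deriv g)) := by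
  rw [show (3:ℕ) = 2+1 from rfl, iteratedDeriv_succ, iter2]

private lemma d3_cd2 {g : ℝ → ℝ} (hg : ContDiff ℝ 3 g) : ContDiff ℝ 2 (deriv g) := by
  have h : ContDiff ℝ ((2:ℕ∞)+1) g := by exact_mod_cast hg
  exact ((contDiff_succ_iff_deriv).mp (by exact_mod_cast h)).2.2

private lemma d2_cd1 {g : ℝ → ℝ} (hg : ContDiff ℝ 2 g) : ContDiff ℝ 1 (deriv g) := by
  have h : ContDiff ℝ ((1:ℕ∞)+1) g := by exact_mod_cast hg
  exact ((contDiff_succ_iff_deriv).mp (by exact_mod_cast h)).2.2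

private lemma d1_cont {g : ℝ → ℝ} (hg : ContDiff ℝ 1 g) : Differentiable ℝ g ∧ Continuous (deriv g) := by
  have := (contDiff_one_iff_deriv).mp hg
  exact this

private lemma sdt_max {u : ℝ → ℝ} {x c : ℝ} (hd : Differentiable ℝ u)
    (hc : HasDerivAt (deriv u) c x) (hm : IsLocalMax u x) : c ≤ 0 := by
  by_contra hpos
  push_neg at hpos
  have h0 : deriv u x = 0 := hm.deriv_eq_zero
  have hslope : Tendsto (slope (deriv u) x) (𝓝[≠] x) (𝓝 c) :=
    hasDerivAt_iff_tendsto_slope.mp hc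
  have hmono : 𝓝[>] x ≤ 𝓝[≠] x :=
    nhdsWithin_mono x (fun y hy => ne_of_gt hy)
  have h1 : ∀ᶠ y in 𝓝[>] x, 0 < slope (deriv u) x y :=
    (hslope.mono_left hmono).eventually (eventually_gt_nhds hpos)
  have h2 : ∀ᶠ y in 𝓝[>] x, 0 < deriv u y := by
    filter_upwards [h1, self_mem_nhdsWithin] with y hy hy'
    have hyx : (0:ℝ) < y - x := sub_pos.mpr hy'
    have hs : slope (deriv u) x y = deriv u y / (y - x) := by
      rw [slope_def_field, h0]; ring
    rw [hs] at hy
    have := mul_pos hy hyx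
    rwa [div_mul_cancel₀ _ (ne_of_gt hyx)] at this
  obtain ⟨b, hb, hsub⟩ := mem_nhdsGT_iff_exists_Ioo_subset.mp h2
  obtain ⟨δ, hδ, hball⟩ := Metric.eventually_nhds_iff.mp hm
  set y0 := min ((x + b)/2) (x + δ/2) with hy0
  have hxy0 : x < y0 := by
    apply lt_min
    · rw [mem_Ioi] at hb; linarith
    · linarith
  have hy0b : y0 < b := by
    have := min_le_left ((x + b)/2) (x + δ/2)
    rw [mem_Ioi] at hb; have : y0 ≤ (x+b)/2 := min_le_left _ _
    linarith
  have hsm : StrictMonoOn u (Icc x y0) := by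
    apply strictMonoOn_of_deriv_pos (convex_Icc x y0) (hd.continuous.continuousOn)
    intro y hy
    rw [interior_Icc] at hy
    exact hsub ⟨hy.1, lt_trans hy.2 hy0b⟩
  have h3 : u x < u y0 := hsm (left_mem_Icc.mpr hxy0.le) (right_mem_Icc.mpr hxy0.le) hxy0
  have h4 : u y0 ≤ u x := by
    apply hball
    have : y0 ≤ x + δ/2 := min_le_right _ _
    rw [Real.dist_eq, abs_of_pos (sub_pos.mpr hxy0)]
    linarith
  linarith

private lemma sdt_min {u : ℝ → ℝ} {x c : ℝ} (hd : Differentiable ℝ u)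
    (hc : HasDerivAt (deriv u) c x) (hm : IsLocalMin u x) : 0 ≤ c := by
  have hneg : Differentiable ℝ (fun y => -u y) := hd.neg
  have hde : deriv (fun y => -u y) = fun y => -(deriv u y) := funext fun y => deriv.neg
  have hc' : HasDerivAt (deriv (fun y => -u y)) (-c) x := by
    rw [hde]; exact hc.neg
  have := sdt_max hneg hc' hm.neg
  linarith

private lemma landau {u : ℝ → ℝ} {K0 K2 h : ℝ} (hd : Differentiable ℝ u)
    (hd' : Continuous (deriv u)) (hh0 : 0 < h) (hh1 : h ≤ 1)
    (hb : ∀ y ∈ Icc (0:ℝ) 1, |u y| ≤ K0)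
    (h2 : ∀ y ∈ Ioo (0:ℝ) 1, ∃ c, HasDerivAt (deriv u) c y ∧ |c| ≤ K2) :
    ∀ x ∈ Icc (0:ℝ) 1, |deriv u x| ≤ 2 * K0 / h + h * K2 := by
  intro x hx
  obtain ⟨hx0, hx1⟩ := hx
  set s := min x (1 - h) with hs
  have hs0 : 0 ≤ s := le_min hx0 (by linarith)
  have hsx : s ≤ x := min_le_left _ _
  have hxs : x ≤ s + h := by
    rcases min_cases x (1-h) with ⟨he, _⟩ | ⟨he, hle⟩
    · rw [hs, he]; linarith
    · rw [hs, he]; linarith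
  have hsh : s + h ≤ 1 := by
    have : s ≤ 1 - h := min_le_right _ _
    linarith
  have hssub : Icc s (s+h) ⊆ Icc 0 1 := Icc_subset_Icc hs0 hsh
  have hlt : s < s + h := lt_add_of_pos_right s hh0
  obtain ⟨ξ, hξ, hξe⟩ := exists_deriv_eq_slope u hlt (hd.continuous.continuousOn)
    (hd.differentiableOn)
  have hξIcc : ξ ∈ Icc s (s+h) := Ioo_subset_Icc_self hξ
  have hξ01 : ξ ∈ Ioo (0:ℝ) 1 := ⟨lt_of_le_of_lt hs0 hξ.1, lt_of_lt_of_le hξ.2 hsh⟩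
  have hK2 : 0 ≤ K2 := by
    obtain ⟨c, _, hc2⟩ := h2 ξ hξ01
    exact le_trans (abs_nonneg c) hc2
  have hξb : |deriv u ξ| ≤ 2 * K0 / h := by
    rw [hξe]
    have hne : s + h - s = h := by ring
    rw [hne, abs_div, abs_of_pos hh0]
    gcongr
    calc |u (s+h) - u s| ≤ |u (s+h)| + |u s| := abs_sub _ _
      _ ≤ 2 * K0 := by
          have h1 := hb (s+h) (hssub (right_mem_Icc.mpr hlt.le))
          have h2 := hb s (hssub (left_mem_Icc.mpr hlt.le))
          linarith
  have key : ∀ a b : ℝ, a < b → a ∈ Icc s (s+h) → b ∈ Icc s (s+h) →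
      |deriv u b - deriv u a| ≤ K2 * h := by
    intro a b hab ha hb'
    have hopen : Ioo a b ⊆ Ioo (0:ℝ) 1 := by
      intro y hy
      constructor
      · have : (0:ℝ) ≤ a := le_trans hs0 ha.1
        linarith [hy.1]
      · have : b ≤ 1 := le_trans hb'.2 hsh
        linarith [hy.2]
    obtain ⟨η, hη, hηe⟩ := exists_deriv_eq_slope (deriv u) hab (hd'.continuousOn)
      (fun y hy => ((h2 y (hopen hy)).choose_spec.1).differentiableAt.differentiableWithinAt)
    have hη01 := hopen hη
    obtain ⟨c, hc1, hc2⟩ := h2 η hη01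
    have hcd : deriv (deriv u) η = c := hc1.deriv
    have hbnd : |deriv (deriv u) η| ≤ K2 := hcd ▸ hc2
    have heq : deriv u b - deriv u a = deriv (deriv u) η * (b - a) := by
      rw [hηe]; field_simp [sub_ne_zero.mpr (ne_of_gt hab)]
    rw [heq, abs_mul]
    have h5 : |b - a| ≤ h := by
      rw [abs_of_pos (sub_pos.mpr hab)]
      have := ha.1; have := hb'.2; linarith
    exact mul_le_mul hbnd h5 (abs_nonneg _) hK2
  have hxIcc : x ∈ Icc s (s+h) := ⟨hsx, hxs⟩
  have hKh : 0 ≤ K2 * h := mul_nonneg hK2 hh0.le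
  rcases lt_trichotomy x ξ with hlt' | heq | hgt
  · have hk := key x ξ hlt' hxIcc hξIcc
    have h6 : |deriv u x| ≤ |deriv u ξ| + |deriv u ξ - deriv u x| := by
      calc |deriv u x| = |deriv u ξ - (deriv u ξ - deriv u x)| := by congr 1; ring
        _ ≤ |deriv u ξ| + |deriv u ξ - deriv u x| := abs_sub _ _
    nlinarith [hk, hξb, h6]
  · rw [heq]
    nlinarith [hξb]
  · have hk := key ξ x hgt hξIcc hxIcc
    have h6 : |deriv u x| ≤ |deriv u ξ| + |deriv u x - deriv u ξ| := by
      calc |deriv u x| = |deriv u ξ + (deriv u x - deriv u ξ)| := by congr 1; ring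
        _ ≤ |deriv u ξ| + |deriv u x - deriv u ξ| := abs_add_le _ _
    nlinarith [hk, hξb, h6]

private lemma rowkey {n : ℕ} {a : ℕ → ℕ → ℝ} {α : ℝ} (hα0 : 0 < α)
    (hoff : ∀ i j, i ∈ Finset.Icc 1 n → j ∈ Finset.Icc 1 n → i ≠ j → a i j ≤ 0)
    (hrow : ∀ i ∈ Finset.Icc 1 n, α < ∑ j ∈ Finset.Icc 1 n, a i j)
    {w : ℕ → ℝ} {i0 : ℕ} (hi0 : i0 ∈ Finset.Icc 1 n)
    (hM : ∀ j ∈ Finset.Icc 1 n, |w j| ≤ |w i0|) :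
    α * |w i0| ≤ (if 0 ≤ w i0 then (1:ℝ) else -1) * ∑ j ∈ Finset.Icc 1 n, a i0 j * w j := by
  set s : ℝ := if 0 ≤ w i0 then (1:ℝ) else -1 with hsdef
  have hsw : s * w i0 = |w i0| := by
    rcases le_or_gt 0 (w i0) with hle | hlt
    · rw [hsdef, if_pos hle, abs_of_nonneg hle]; ring
    · rw [hsdef, if_neg (not_le.mpr hlt), abs_of_neg hlt]; ring
  have hrew : s * ∑ j ∈ Finset.Icc 1 n, a i0 j * w j
      = ∑ j ∈ Finset.Icc 1 n, a i0 j * (s * w j) := by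
    rw [Finset.mul_sum]
    exact Finset.sum_congr rfl fun j _ => by ring
  rw [hrew]
  rw [← Finset.add_sum_erase _ _ hi0]
  have hterm : ∀ j ∈ (Finset.Icc 1 n).erase i0, a i0 j * |w i0| ≤ a i0 j * (s * w j) := by
    intro j hj
    have hjS := Finset.mem_of_mem_erase hj
    have hne : i0 ≠ j := (Finset.ne_of_mem_erase hj).symm
    have hoff' := hoff i0 j hi0 hjS hne
    have hswj : s * w j ≤ |w i0| := by
      have h1 : s * w j ≤ |s * w j| := le_abs_self _
      have h2 : |s * w j| = |w j| := by
        rw [abs_mul]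
        have : |s| = 1 := by
          rcases le_or_gt 0 (w i0) with hle | hlt
          · rw [hsdef, if_pos hle]; simp
          · rw [hsdef, if_neg (not_le.mpr hlt)]; simp
        rw [this, one_mul]
      exact le_trans h1 (h2 ▸ hM j hjS)
    exact mul_le_mul_of_nonpos_left hswj hoff'
  have hsum : ∑ j ∈ (Finset.Icc 1 n).erase i0, a i0 j * |w i0|
      ≤ ∑ j ∈ (Finset.Icc 1 n).erase i0, a i0 j * (s * w j) :=
    Finset.sum_le_sum hterm
  have hdiag : a i0 i0 * |w i0| = a i0 i0 * (s * w i0) := by rw [hsw]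
  have hfull : (∑ j ∈ Finset.Icc 1 n, a i0 j) * |w i0|
      ≤ a i0 i0 * (s * w i0) + ∑ j ∈ (Finset.Icc 1 n).erase i0, a i0 j * (s * w j) := by
    rw [← Finset.add_sum_erase _ _ hi0, add_mul]
    rw [← hdiag]
    have : ∑ j ∈ (Finset.Icc 1 n).erase i0, a i0 j * |w i0|
        = (∑ j ∈ (Finset.Icc 1 n).erase i0, a i0 j) * |w i0| := by
      rw [Finset.sum_mul]
    linarith [hsum, this ▸ hsum]
  have hαle : α * |w i0| ≤ (∑ j ∈ Finset.Icc 1 n, a i0 j) * |w i0| :=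
    mul_le_mul_of_nonneg_right (le_of_lt (hrow i0 hi0)) (abs_nonneg _)
  linarith

private lemma maxsel {n : ℕ} (hn : 1 ≤ n) (w : ℕ → ℝ → ℝ)
    (hw : ∀ i ∈ Finset.Icc 1 n, Continuous (w i)) :
    ∃ x0 ∈ Icc (0:ℝ) 1, ∃ i0 ∈ Finset.Icc 1 n,
      ∀ x ∈ Icc (0:ℝ) 1, ∀ j ∈ Finset.Icc 1 n, |w j x| ≤ |w i0 x0| := by
  have H : ∀ i ∈ Finset.Icc 1 n, ∃ x, x ∈ Icc (0:ℝ) 1 ∧ ∀ y ∈ Icc (0:ℝ) 1, |w i y| ≤ |w i x| := by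
    intro i hi
    obtain ⟨x, hx, hmax⟩ := isCompact_Icc.exists_isMaxOn (f := fun y => |w i y|)
      (Set.nonempty_Icc.mpr (by norm_num : (0:ℝ) ≤ 1)) ((hw i hi).abs.continuousOn)
    exact ⟨x, hx, fun y hy => hmax hy⟩
  choose! xsel hx1 hx2 using H
  obtain ⟨i0, hi0, hmaxi⟩ := Finset.exists_max_image (Finset.Icc 1 n)
    (fun i => |w i (xsel i)|) ⟨1, Finset.mem_Icc.mpr ⟨le_refl 1, hn⟩⟩
  refine ⟨xsel i0, hx1 i0 hi0, i0, hi0, fun x hx j hj => ?_⟩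
  exact le_trans (hx2 j hj x hx) (hmaxi j hj)
private lemma maxprin {n : ℕ} (hn : 1 ≤ n) {A : ℝ → ℕ → ℕ → ℝ} {α : ℝ} (hα0 : 0 < α)
    (hAoff : ∀ x ∈ Icc (0:ℝ) 1, ∀ i j, i ∈ Finset.Icc 1 n → j ∈ Finset.Icc 1 n →
      i ≠ j → A x i j ≤ 0)
    (hα : ∀ x ∈ Icc (0:ℝ) 1, ∀ i ∈ Finset.Icc 1 n, α < ∑ j ∈ Finset.Icc 1 n, A x i j)
    {z : ℕ → ℝ → ℝ} {G : ℝ} (hG : 0 ≤ G)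
    (hzc : ∀ i ∈ Finset.Icc 1 n, Continuous (z i))
    (hzd : ∀ i ∈ Finset.Icc 1 n, Differentiable ℝ (z i))
    (hbdry : ∀ x : ℝ, (x = 0 ∨ x = 1) → ∀ i0 ∈ Finset.Icc 1 n,
      (∀ j ∈ Finset.Icc 1 n, |z j x| ≤ |z i0 x|) → α * |z i0 x| ≤ G)
    (hint : ∀ x ∈ Ioo (0:ℝ) 1, ∀ i ∈ Finset.Icc 1 n, ∃ δ c ψ, 0 ≤ δ ∧
      HasDerivAt (deriv (z i)) c x ∧
      (∑ j ∈ Finset.Icc 1 n, A x i j * z j x) = ψ + δ * c ∧ |ψ| ≤ G) :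
    ∀ x ∈ Icc (0:ℝ) 1, ∀ i ∈ Finset.Icc 1 n, α * |z i x| ≤ G := by
  obtain ⟨x0, hx0, i0, hi0, hmax⟩ := maxsel hn (fun i x => z i x) hzc
  have main : α * |z i0 x0| ≤ G := by
    rcases eq_or_lt_of_le hx0.1 with h0 | h0
    · exact hbdry x0 (Or.inl h0.symm) i0 hi0 (fun j hj => hmax x0 hx0 j hj)
    rcases eq_or_lt_of_le hx0.2 with h1 | h1
    · exact hbdry x0 (Or.inr h1) i0 hi0 (fun j hj => hmax x0 hx0 j hj)
    -- interior case
    obtain ⟨δ, c, ψ, hδ, hc, heq, hψ⟩ := hint x0 ⟨h0, h1⟩ i0 hi0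
    have hrk := rowkey hα0 (hAoff x0 hx0) (hα x0 hx0) hi0
      (fun j hj => hmax x0 hx0 j hj)
    set s : ℝ := if 0 ≤ z i0 x0 then (1:ℝ) else -1 with hsdef
    have hsc : s * c ≤ 0 := by
      rcases le_or_gt 0 (z i0 x0) with hpos | hneg
      · have hs1 : s = 1 := if_pos hpos
        have hlm : IsLocalMax (z i0) x0 := by
          apply Filter.eventually_of_mem (Icc_mem_nhds h0 h1)
          intro y hy
          calc z i0 y ≤ |z i0 y| := le_abs_self _
            _ ≤ |z i0 x0| := hmax y hy i0 hi0
            _ = z i0 x0 := abs_of_nonneg hpos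
        have := sdt_max (hzd i0 hi0) hc hlm
        rw [hs1]; linarith
      · have hs1 : s = -1 := if_neg (not_le.mpr hneg)
        have hlm : IsLocalMin (z i0) x0 := by
          apply Filter.eventually_of_mem (Icc_mem_nhds h0 h1)
          intro y hy
          calc z i0 x0 = -|z i0 x0| := by rw [abs_of_neg hneg]; ring
            _ ≤ -|z i0 y| := neg_le_neg (hmax y hy i0 hi0)
            _ ≤ z i0 y := neg_abs_le _
        have := sdt_min (hzd i0 hi0) hc hlm
        rw [hs1]; linarith
    have hsψ : s * ψ ≤ |ψ| := by
      rcases le_or_gt 0 (z i0 x0) with hpos | hneg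
      · rw [hsdef, if_pos hpos, one_mul]; exact le_abs_self _
      · rw [hsdef, if_neg (not_le.mpr hneg)]
        calc (-1) * ψ ≤ |(-1) * ψ| := le_abs_self _
          _ = |ψ| := by rw [abs_mul]; simp
    calc α * |z i0 x0| ≤ s * ∑ j ∈ Finset.Icc 1 n, A x0 i0 j * z j x0 := hrk
      _ = s * ψ + δ * (s * c) := by rw [heq]; ring
      _ ≤ |ψ| + 0 := by
          have : δ * (s * c) ≤ 0 := mul_nonpos_of_nonneg_of_nonpos hδ hsc
          linarith
      _ ≤ G := by linarith
  intro x hx i hi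
  calc α * |z i x| ≤ α * |z i0 x0| := by
        apply mul_le_mul_of_nonneg_left (hmax x hx i hi) hα0.le
    _ ≤ G := main

private lemma sumbnd {n : ℕ} {t : ℕ → ℝ} {c : ℝ} (h : ∀ j ∈ Finset.Icc 1 n, |t j| ≤ c) :
    |∑ j ∈ Finset.Icc 1 n, t j| ≤ n * c := by
  calc |∑ j ∈ Finset.Icc 1 n, t j| ≤ ∑ j ∈ Finset.Icc 1 n, |t j| :=
        Finset.abs_sum_le_sum_abs _ _
    _ ≤ ∑ _j ∈ Finset.Icc 1 n, c := Finset.sum_le_sum h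
    _ = n * c := by rw [Finset.sum_const, Nat.card_Icc]; simp [nsmul_eq_mul]

private lemma sgn_mul_le_abs (P : Prop) [Decidable P] (r : ℝ) :
    (if P then (1:ℝ) else -1) * r ≤ |r| := by
  split
  · rw [one_mul]; exact le_abs_self r
  · rw [neg_one_mul]; exact neg_le_abs r

noncomputable def hstep (n : ℕ) (α B : ℝ) : ℝ := min 1 (α/(4*n*B))
noncomputable def CC1 (n : ℕ) (α B : ℝ) : ℝ :=
  4*(B/α)/(hstep n α B) + 2*(hstep n α B)*(B + n*B*(B/α))/α
noncomputable def CC2 (n : ℕ) (α B : ℝ) : ℝ :=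
  (B + n*(B*(B/α) + 2*(B*CC1 n α B)))/α
noncomputable def DD (n : ℕ) (α B : ℝ) : ℝ :=
  B + n*(B*(B/α) + 2*(B*CC1 n α B) + B*CC2 n α B)

private lemma core
    (n : ℕ) (hn : 1 ≤ n)
    (A : ℝ → ℕ → ℕ → ℝ)
    (hAsm : ∀ i j, 1 ≤ i → i ≤ n → 1 ≤ j → j ≤ n → ContDiff ℝ 3 (fun x => A x i j))
    (hAoff : ∀ x ∈ Icc (0:ℝ) 1, ∀ i j, 1 ≤ i → i ≤ n → 1 ≤ j → j ≤ n → i ≠ j → A x i j ≤ 0)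
    (α : ℝ) (hα0 : 0 < α)
    (hα : ∀ x ∈ Icc (0:ℝ) 1, ∀ i, 1 ≤ i → i ≤ n → α < ∑ j ∈ Finset.Icc 1 n, A x i j)
    (f : ℝ → ℕ → ℝ) (hf : ∀ i, 1 ≤ i → i ≤ n → ContDiff ℝ 3 (fun t => f t i))
    (B : ℝ) (hB1 : 1 ≤ B)
    (hbA0 : ∀ x ∈ Icc (0:ℝ) 1, ∀ i ∈ Finset.Icc 1 n, ∀ j ∈ Finset.Icc 1 n, |A x i j| ≤ B)
    (hbA1 : ∀ x ∈ Icc (0:ℝ) 1, ∀ i ∈ Finset.Icc 1 n, ∀ j ∈ Finset.Icc 1 n,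
      |deriv (fun t => A t i j) x| ≤ B)
    (hbA2 : ∀ x ∈ Icc (0:ℝ) 1, ∀ i ∈ Finset.Icc 1 n, ∀ j ∈ Finset.Icc 1 n,
      |deriv (deriv (fun t => A t i j)) x| ≤ B)
    (hbf0 : ∀ x ∈ Icc (0:ℝ) 1, ∀ i ∈ Finset.Icc 1 n, |f x i| ≤ B)
    (hbf2 : ∀ x ∈ Icc (0:ℝ) 1, ∀ i ∈ Finset.Icc 1 n, |deriv (deriv (fun t => f t i)) x| ≤ B)
    (ε : ℕ → ℝ) (hε0 : ∀ i, 1 ≤ i → i ≤ n → 0 < ε i) (hε1 : ∀ i, 1 ≤ i → i ≤ n → ε i ≤ 1)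
    (v : ℝ → ℕ → ℝ) (hv : ∀ i, 1 ≤ i → i ≤ n → ContDiff ℝ 3 (fun t => v t i))
    (hLv : ∀ y ∈ Ioo (0:ℝ) 1, ∀ i, 1 ≤ i → i ≤ n →
      -(ε i) * iteratedDeriv 2 (fun t => v t i) y
        + ∑ j ∈ Finset.Icc 1 n, A y i j * v y j = f y i)
    (hb0 : ∀ i, 1 ≤ i → i ≤ n → ∑ j ∈ Finset.Icc 1 n, A 0 i j * v 0 j = f 0 i)
    (hb1 : ∀ i, 1 ≤ i → i ≤ n → ∑ j ∈ Finset.Icc 1 n, A 1 i j * v 1 j = f 1 i) :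
    ∀ x ∈ Icc (0:ℝ) 1, ∀ i ∈ Finset.Icc 1 n,
      |v x i| ≤ B/α ∧ |deriv (fun t => v t i) x| ≤ CC1 n α B ∧
      |deriv (deriv (fun t => v t i)) x| ≤ CC2 n α B ∧
      |deriv (deriv (deriv (fun t => v t i))) x| ≤
        (2*CC2 n α B + DD n α B)/Real.sqrt (ε i) := by
  have hmem : ∀ {i : ℕ}, i ∈ Finset.Icc 1 n → 1 ≤ i ∧ i ≤ n := fun h => Finset.mem_Icc.mp h
  have hB0 : (0:ℝ) < B := by linarith
  have hn1 : (1:ℝ) ≤ (n:ℝ) := by exact_mod_cast hn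
  have hε0' : ∀ i ∈ Finset.Icc 1 n, 0 < ε i := fun i hi => hε0 i (hmem hi).1 (hmem hi).2
  -- smoothness of v
  have hv3 : ∀ i ∈ Finset.Icc 1 n, ContDiff ℝ 3 (fun t => v t i) :=
    fun i hi => hv i (hmem hi).1 (hmem hi).2
  have hvd : ∀ i ∈ Finset.Icc 1 n, Differentiable ℝ (fun t => v t i) :=
    fun i hi => (hv3 i hi).differentiable (by norm_num)
  have hv1cd : ∀ i ∈ Finset.Icc 1 n, ContDiff ℝ 2 (deriv (fun t => v t i)) :=
    fun i hi => d3_cd2 (hv3 i hi)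
  have hv1d : ∀ i ∈ Finset.Icc 1 n, Differentiable ℝ (deriv (fun t => v t i)) :=
    fun i hi => (hv1cd i hi).differentiable (by norm_num)
  have hv2cd : ∀ i ∈ Finset.Icc 1 n, ContDiff ℝ 1 (deriv (deriv (fun t => v t i))) :=
    fun i hi => d2_cd1 (hv1cd i hi)
  have hv2d : ∀ i ∈ Finset.Icc 1 n, Differentiable ℝ (deriv (deriv (fun t => v t i))) :=
    fun i hi => (d1_cont (hv2cd i hi)).1
  have hv3c : ∀ i ∈ Finset.Icc 1 n, Continuous (deriv (deriv (deriv (fun t => v t i)))) :=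
    fun i hi => (d1_cont (hv2cd i hi)).2
  have hvc : ∀ i ∈ Finset.Icc 1 n, Continuous (fun t => v t i) :=
    fun i hi => (hvd i hi).continuous
  have hv1c : ∀ i ∈ Finset.Icc 1 n, Continuous (deriv (fun t => v t i)) :=
    fun i hi => (hv1d i hi).continuous
  have hv2c : ∀ i ∈ Finset.Icc 1 n, Continuous (deriv (deriv (fun t => v t i))) :=
    fun i hi => (hv2d i hi).continuous
  -- smoothness of A entries
  have hA3 : ∀ i ∈ Finset.Icc 1 n, ∀ j ∈ Finset.Icc 1 n, ContDiff ℝ 3 (fun x => A x i j) :=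
    fun i hi j hj => hAsm i j (hmem hi).1 (hmem hi).2 (hmem hj).1 (hmem hj).2
  have hAd : ∀ i ∈ Finset.Icc 1 n, ∀ j ∈ Finset.Icc 1 n, Differentiable ℝ (fun x => A x i j) :=
    fun i hi j hj => (hA3 i hi j hj).differentiable (by norm_num)
  have hA1d : ∀ i ∈ Finset.Icc 1 n, ∀ j ∈ Finset.Icc 1 n,
      Differentiable ℝ (deriv (fun x => A x i j)) :=
    fun i hi j hj => (d3_cd2 (hA3 i hi j hj)).differentiable (by norm_num)
  -- smoothness of f
  have hf3 : ∀ i ∈ Finset.Icc 1 n, ContDiff ℝ 3 (fun t => f t i) :=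
    fun i hi => hf i (hmem hi).1 (hmem hi).2
  have hfd : ∀ i ∈ Finset.Icc 1 n, Differentiable ℝ (fun t => f t i) :=
    fun i hi => (hf3 i hi).differentiable (by norm_num)
  have hf1d : ∀ i ∈ Finset.Icc 1 n, Differentiable ℝ (deriv (fun t => f t i)) :=
    fun i hi => (d3_cd2 (hf3 i hi)).differentiable (by norm_num)
  -- the ODE on the open interval
  have hodeIoo : ∀ y ∈ Ioo (0:ℝ) 1, ∀ i ∈ Finset.Icc 1 n,
      ε i * deriv (deriv (fun t => v t i)) y
        = (∑ j ∈ Finset.Icc 1 n, A y i j * v y j) - f y i := by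
    intro y hy i hi
    have h := hLv y hy i (hmem hi).1 (hmem hi).2
    rw [iter2] at h
    linarith
  -- extended to the closed interval by continuity
  have hode : ∀ y ∈ Icc (0:ℝ) 1, ∀ i ∈ Finset.Icc 1 n,
      ε i * deriv (deriv (fun t => v t i)) y
        = (∑ j ∈ Finset.Icc 1 n, A y i j * v y j) - f y i := by
    intro y hy i hi
    have hc1 : Continuous (fun t => ε i * deriv (deriv (fun s => v s i)) t) :=
      continuous_const.mul (hv2c i hi)
    have hc2 : Continuous (fun t => (∑ j ∈ Finset.Icc 1 n, A t i j * v t j) - f t i) := by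
      apply Continuous.sub
      · exact continuous_finset_sum _ (fun j hj => ((hA3 i hi j hj).continuous).mul (hvc j hj))
      · exact (hf3 i hi).continuous
    have hcl := Set.EqOn.closure (fun t ht => hodeIoo t ht i hi) hc1 hc2
    have hcls : closure (Ioo (0:ℝ) 1) = Icc 0 1 := closure_Ioo (by norm_num)
    exact hcl (by rw [hcls]; exact hy)
  -- z vanishes at the boundary
  have hz0 : ∀ i ∈ Finset.Icc 1 n, deriv (deriv (fun t => v t i)) 0 = 0 := by
    intro i hi
    have h := hode 0 (by constructor <;> norm_num) i hi
    rw [hb0 i (hmem hi).1 (hmem hi).2, sub_self] at h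
    exact (mul_eq_zero.mp h).resolve_left (ne_of_gt (hε0' i hi))
  have hz1 : ∀ i ∈ Finset.Icc 1 n, deriv (deriv (fun t => v t i)) 1 = 0 := by
    intro i hi
    have h := hode 1 (by constructor <;> norm_num) i hi
    rw [hb1 i (hmem hi).1 (hmem hi).2, sub_self] at h
    exact (mul_eq_zero.mp h).resolve_left (ne_of_gt (hε0' i hi))
  -- derivative formulas
  have hφd1 : ∀ i ∈ Finset.Icc 1 n, ∀ x : ℝ,
      HasDerivAt (fun t => (∑ j ∈ Finset.Icc 1 n, A t i j * v t j) - f t i)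
        ((∑ j ∈ Finset.Icc 1 n, (deriv (fun s => A s i j) x * v x j
          + A x i j * deriv (fun s => v s j) x)) - deriv (fun s => f s i) x) x := by
    intro i hi x
    apply HasDerivAt.sub
    · exact HasDerivAt.fun_sum (fun j hj =>
        ((hAd i hi j hj x).hasDerivAt.mul ((hvd j hj) x).hasDerivAt))
    · exact ((hfd i hi) x).hasDerivAt
  have hφd2 : ∀ i ∈ Finset.Icc 1 n, ∀ x : ℝ,
      HasDerivAt (fun t => (∑ j ∈ Finset.Icc 1 n, (deriv (fun s => A s i j) t * v t j
          + A t i j * deriv (fun s => v s j) t)) - deriv (fun s => f s i) t)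
        ((∑ j ∈ Finset.Icc 1 n, ((deriv (deriv (fun s => A s i j)) x * v x j
            + deriv (fun s => A s i j) x * deriv (fun s => v s j) x)
          + (deriv (fun s => A s i j) x * deriv (fun s => v s j) x
            + A x i j * deriv (deriv (fun s => v s j)) x)))
          - deriv (deriv (fun s => f s i)) x) x := by
    intro i hi x
    apply HasDerivAt.sub
    · apply HasDerivAt.fun_sum
      intro j hj
      exact (((hA1d i hi j hj) x).hasDerivAt.mul ((hvd j hj) x).hasDerivAt).add
        (((hAd i hi j hj) x).hasDerivAt.mul ((hv1d j hj) x).hasDerivAt)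
    · exact ((hf1d i hi) x).hasDerivAt
  -- third-derivative identity on the open interval
  have h3eq : ∀ i ∈ Finset.Icc 1 n, ∀ y ∈ Ioo (0:ℝ) 1,
      deriv (deriv (deriv (fun t => v t i))) y
        = ((∑ j ∈ Finset.Icc 1 n, (deriv (fun s => A s i j) y * v y j
          + A y i j * deriv (fun s => v s j) y)) - deriv (fun s => f s i) y) / ε i := by
    intro i hi y hy
    have hEv : deriv (deriv (fun t => v t i))
        =ᶠ[𝓝 y] (fun t => ((∑ j ∈ Finset.Icc 1 n, A t i j * v t j) - f t i) / ε i) := by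
      apply Filter.eventuallyEq_of_mem (isOpen_Ioo.mem_nhds hy)
      intro t ht
      rw [eq_div_iff (ne_of_gt (hε0' i hi)), mul_comm]
      exact hodeIoo t ht i hi
    rw [hEv.deriv_eq]
    exact ((hφd1 i hi y).div_const (ε i)).deriv
  -- fourth derivative (of v) exists on the open interval
  have hz2 : ∀ i ∈ Finset.Icc 1 n, ∀ y ∈ Ioo (0:ℝ) 1,
      HasDerivAt (deriv (deriv (deriv (fun t => v t i))))
        (((∑ j ∈ Finset.Icc 1 n, ((deriv (deriv (fun s => A s i j)) y * v y j
            + deriv (fun s => A s i j) y * deriv (fun s => v s j) y)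
          + (deriv (fun s => A s i j) y * deriv (fun s => v s j) y
            + A y i j * deriv (deriv (fun s => v s j)) y)))
          - deriv (deriv (fun s => f s i)) y) / ε i) y := by
    intro i hi y hy
    have hEv3 : deriv (deriv (deriv (fun t => v t i)))
        =ᶠ[𝓝 y] (fun t => ((∑ j ∈ Finset.Icc 1 n, (deriv (fun s => A s i j) t * v t j
          + A t i j * deriv (fun s => v s j) t)) - deriv (fun s => f s i) t) / ε i) := by
      apply Filter.eventuallyEq_of_mem (isOpen_Ioo.mem_nhds hy)
      intro t ht
      exact h3eq i hi t ht
    exact (hEv3.hasDerivAt_iff).mpr ((hφd2 i hi y).div_const (ε i))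
  have hAoff' : ∀ x ∈ Icc (0:ℝ) 1, ∀ i j, i ∈ Finset.Icc 1 n → j ∈ Finset.Icc 1 n →
      i ≠ j → A x i j ≤ 0 :=
    fun x hx i j hi hj hne =>
      hAoff x hx i j (hmem hi).1 (hmem hi).2 (hmem hj).1 (hmem hj).2 hne
  have hα' : ∀ x ∈ Icc (0:ℝ) 1, ∀ i ∈ Finset.Icc 1 n,
      α < ∑ j ∈ Finset.Icc 1 n, A x i j :=
    fun x hx i hi => hα x hx i (hmem hi).1 (hmem hi).2
  -- claim 0 : maximum principle for v
  have claim0 : ∀ x ∈ Icc (0:ℝ) 1, ∀ i ∈ Finset.Icc 1 n, α * |v x i| ≤ B := by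
    apply maxprin hn hα0 hAoff' hα' (z := fun i x => v x i)
      (by linarith : (0:ℝ) ≤ B) hvc hvd
    · intro x hx i0 hi0 hmx
      have hxI : x ∈ Icc (0:ℝ) 1 := by rcases hx with rfl|rfl <;> constructor <;> norm_num
      have hrk := rowkey hα0 (hAoff' x hxI) (hα' x hxI) hi0 hmx
      have hfx : ∑ j ∈ Finset.Icc 1 n, A x i0 j * v x j = f x i0 := by
        rcases hx with rfl|rfl
        · exact hb0 i0 (hmem hi0).1 (hmem hi0).2
        · exact hb1 i0 (hmem hi0).1 (hmem hi0).2
      rw [hfx] at hrk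
      calc α * |v x i0| ≤ _ := hrk
        _ ≤ |f x i0| := sgn_mul_le_abs _ _
        _ ≤ B := hbf0 x hxI i0 hi0
    · intro x hx i hi
      refine ⟨ε i, deriv (deriv (fun t => v t i)) x, f x i, (hε0' i hi).le,
        ((hv1d i hi) x).hasDerivAt, ?_, hbf0 x (Ioo_subset_Icc_self hx) i hi⟩
      have := hodeIoo x hx i hi
      linarith
  have claim0' : ∀ x ∈ Icc (0:ℝ) 1, ∀ i ∈ Finset.Icc 1 n, |v x i| ≤ B/α := by
    intro x hx i hi
    rw [le_div_iff₀ hα0]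
    have := claim0 x hx i hi
    linarith
  -- select the maximum of first derivatives
  obtain ⟨x1, hx1, i1, hi1, hmax1⟩ := maxsel hn (fun i => deriv (fun t => v t i)) hv1c
  set M1 := |deriv (fun t => v t i1) x1| with hM1def
  have hM1n : (0:ℝ) ≤ M1 := abs_nonneg _
  -- claim 2 (preliminary) : maximum principle for the second derivatives
  have hGnn : (0:ℝ) ≤ B + n*(B*(B/α) + 2*(B*M1)) := by
    have h1 : (0:ℝ) ≤ B*(B/α) := by positivity
    have h2 : (0:ℝ) ≤ B*M1 := mul_nonneg hB0.le hM1n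
    have h3 : (0:ℝ) ≤ (n:ℝ) := Nat.cast_nonneg n
    nlinarith
  have claim2pre : ∀ x ∈ Icc (0:ℝ) 1, ∀ i ∈ Finset.Icc 1 n,
      α * |deriv (deriv (fun t => v t i)) x| ≤ B + n*(B*(B/α) + 2*(B*M1)) := by
    apply maxprin hn hα0 hAoff' hα'
      (z := fun i => deriv (deriv (fun t => v t i))) hGnn hv2c hv2d
    · intro x hx i0 hi0 _
      have hz : deriv (deriv (fun t => v t i0)) x = 0 := by
        rcases hx with rfl|rfl
        · exact hz0 i0 hi0
        · exact hz1 i0 hi0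
      rw [hz, abs_zero, mul_zero]
      exact hGnn
    · intro x hx i hi
      have hxI := Ioo_subset_Icc_self hx
      have hεne : ε i ≠ 0 := ne_of_gt (hε0' i hi)
      refine ⟨ε i,
        ((∑ j ∈ Finset.Icc 1 n, ((deriv (deriv (fun s => A s i j)) x * v x j
            + deriv (fun s => A s i j) x * deriv (fun s => v s j) x)
          + (deriv (fun s => A s i j) x * deriv (fun s => v s j) x
            + A x i j * deriv (deriv (fun s => v s j)) x)))
          - deriv (deriv (fun s => f s i)) x) / ε i,
        deriv (deriv (fun s => f s i)) x - ∑ j ∈ Finset.Icc 1 n,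
          (deriv (deriv (fun s => A s i j)) x * v x j
            + 2*(deriv (fun s => A s i j) x * deriv (fun s => v s j) x)),
        (hε0' i hi).le, hz2 i hi x hx, ?_, ?_⟩
      · have hcan : ε i * (((∑ j ∈ Finset.Icc 1 n, ((deriv (deriv (fun s => A s i j)) x * v x j
            + deriv (fun s => A s i j) x * deriv (fun s => v s j) x)
          + (deriv (fun s => A s i j) x * deriv (fun s => v s j) x
            + A x i j * deriv (deriv (fun s => v s j)) x)))
          - deriv (deriv (fun s => f s i)) x) / ε i)
            = (∑ j ∈ Finset.Icc 1 n, ((deriv (deriv (fun s => A s i j)) x * v x j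
            + deriv (fun s => A s i j) x * deriv (fun s => v s j) x)
          + (deriv (fun s => A s i j) x * deriv (fun s => v s j) x
            + A x i j * deriv (deriv (fun s => v s j)) x)))
          - deriv (deriv (fun s => f s i)) x := by
          field_simp
        rw [hcan]
        have hsplit : ∑ j ∈ Finset.Icc 1 n, ((deriv (deriv (fun s => A s i j)) x * v x j
            + deriv (fun s => A s i j) x * deriv (fun s => v s j) x)
          + (deriv (fun s => A s i j) x * deriv (fun s => v s j) x
            + A x i j * deriv (deriv (fun s => v s j)) x))
            = (∑ j ∈ Finset.Icc 1 n, (deriv (deriv (fun s => A s i j)) x * v x j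
              + 2*(deriv (fun s => A s i j) x * deriv (fun s => v s j) x)))
              + ∑ j ∈ Finset.Icc 1 n, A x i j * deriv (deriv (fun s => v s j)) x := by
          rw [← Finset.sum_add_distrib]
          exact Finset.sum_congr rfl (fun j _ => by ring)
        rw [hsplit]
        ring
      · have ht : ∀ j ∈ Finset.Icc 1 n, |deriv (deriv (fun s => A s i j)) x * v x j
            + 2*(deriv (fun s => A s i j) x * deriv (fun s => v s j) x)|
            ≤ B*(B/α) + 2*(B*M1) := by
          intro j hj
          have h1 : |deriv (deriv (fun s => A s i j)) x * v x j| ≤ B*(B/α) := by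
            rw [abs_mul]
            exact mul_le_mul (hbA2 x hxI i hi j hj) (claim0' x hxI j hj)
              (abs_nonneg _) hB0.le
          have h2 : |deriv (fun s => A s i j) x * deriv (fun s => v s j) x| ≤ B*M1 := by
            rw [abs_mul]
            exact mul_le_mul (hbA1 x hxI i hi j hj) (hmax1 x hxI j hj)
              (abs_nonneg _) hB0.le
          calc |deriv (deriv (fun s => A s i j)) x * v x j
              + 2*(deriv (fun s => A s i j) x * deriv (fun s => v s j) x)|
              ≤ |deriv (deriv (fun s => A s i j)) x * v x j|
                + |2*(deriv (fun s => A s i j) x * deriv (fun s => v s j) x)| := abs_add_le _ _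
            _ = |deriv (deriv (fun s => A s i j)) x * v x j|
                + 2*|deriv (fun s => A s i j) x * deriv (fun s => v s j) x| := by
                rw [abs_mul (2:ℝ), abs_two]
            _ ≤ B*(B/α) + 2*(B*M1) := by linarith
        have hSb := sumbnd ht
        have hddf := hbf2 x hxI i hi
        calc |deriv (deriv (fun s => f s i)) x - ∑ j ∈ Finset.Icc 1 n,
              (deriv (deriv (fun s => A s i j)) x * v x j
                + 2*(deriv (fun s => A s i j) x * deriv (fun s => v s j) x))|
            ≤ |deriv (deriv (fun s => f s i)) x| + |∑ j ∈ Finset.Icc 1 n,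
              (deriv (deriv (fun s => A s i j)) x * v x j
                + 2*(deriv (fun s => A s i j) x * deriv (fun s => v s j) x))| := abs_sub _ _
          _ ≤ B + n*(B*(B/α) + 2*(B*M1)) := by linarith
  have claim2M1 : ∀ x ∈ Icc (0:ℝ) 1, ∀ i ∈ Finset.Icc 1 n,
      |deriv (deriv (fun t => v t i)) x| ≤ (B + n*(B*(B/α) + 2*(B*M1)))/α := by
    intro x hx i hi
    rw [le_div_iff₀ hα0]
    have := claim2pre x hx i hi
    linarith
  -- claim 1 : bound on the first derivatives
  have hh0 : 0 < hstep n α B := lt_min one_pos (by positivity)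
  have hh1 : hstep n α B ≤ 1 := min_le_left _ _
  have claim1 : M1 ≤ CC1 n α B := by
    have hland := landau (hvd i1 hi1) (hv1c i1 hi1) hh0 hh1
      (fun y hy => claim0' y hy i1 hi1)
      (fun y hy => ⟨deriv (deriv (fun t => v t i1)) y, ((hv1d i1 hi1) y).hasDerivAt,
        claim2M1 y (Ioo_subset_Icc_self hy) i1 hi1⟩) x1 hx1
    have hαne : α ≠ 0 := ne_of_gt hα0
    have hnB : (0:ℝ) < n*B := by nlinarith
    have hhne : hstep n α B ≠ 0 := ne_of_gt hh0
    have e1 : hstep n α B * ((B + n*(B*(B/α) + 2*(B*M1)))/α)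
        = hstep n α B*(B + n*B*(B/α))/α + (hstep n α B*(2*n*B)/α)*M1 := by
      field_simp
      ring
    have hle : hstep n α B ≤ α/(4*n*B) := min_le_right _ _
    have e2 : hstep n α B*(2*n*B)/α ≤ 1/2 := by
      have h4 : hstep n α B*(2*n*B)/α ≤ (α/(4*n*B))*(2*n*B)/α := by gcongr
      have h5 : (α/(4*n*B))*(2*n*B)/α = 1/2 := by
        field_simp
        ring
      linarith
    have e3 : (hstep n α B*(2*n*B)/α)*M1 ≤ (1/2)*M1 :=
      mul_le_mul_of_nonneg_right e2 hM1n
    have e4 : M1 ≤ 2*(B/α)/hstep n α B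
        + (hstep n α B*(B + n*B*(B/α))/α + (hstep n α B*(2*n*B)/α)*M1) := by
      rw [← e1]
      exact hland
    unfold CC1
    have e5 : 2*hstep n α B*(B + (n:ℝ)*B*(B/α))/α
        = 2*(hstep n α B*(B + (n:ℝ)*B*(B/α))/α) := by ring
    have e6 : 4*(B/α)/hstep n α B = 2*(2*(B/α)/hstep n α B) := by ring
    linarith
  -- claim 2 : uniform bound on second derivatives
  have claim2 : ∀ x ∈ Icc (0:ℝ) 1, ∀ i ∈ Finset.Icc 1 n,
      |deriv (deriv (fun t => v t i)) x| ≤ CC2 n α B := by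
    intro x hx i hi
    have h1 := claim2M1 x hx i hi
    have hd2 : (0:ℝ) ≤ (n:ℝ)*(2*B) := by nlinarith
    have hnum := mul_le_mul_of_nonneg_left claim1 hd2
    have h2 : (B + n*(B*(B/α) + 2*(B*M1)))/α ≤ CC2 n α B := by
      unfold CC2
      have hnum2 : B + (n:ℝ)*(B*(B/α) + 2*(B*M1))
          ≤ B + (n:ℝ)*(B*(B/α) + 2*(B*CC1 n α B)) := by nlinarith [hnum]
      gcongr
    linarith
  have hCC1nn : 0 ≤ CC1 n α B := le_trans hM1n claim1
  have hCC2nn : 0 ≤ CC2 n α B := le_trans (abs_nonneg _)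
    (claim2 0 (by constructor <;> norm_num) 1 (Finset.mem_Icc.mpr ⟨le_refl 1, hn⟩))
  -- claim 3 : bound on third derivatives
  have claim3 : ∀ x ∈ Icc (0:ℝ) 1, ∀ i ∈ Finset.Icc 1 n,
      |deriv (deriv (deriv (fun t => v t i))) x|
        ≤ (2*CC2 n α B + DD n α B)/Real.sqrt (ε i) := by
    intro x hx i hi
    have hεi := hε0' i hi
    have hsq0 : 0 < Real.sqrt (ε i) := Real.sqrt_pos.mpr hεi
    have hsq1 : Real.sqrt (ε i) ≤ 1 := by
      rw [show (1:ℝ) = Real.sqrt 1 from (Real.sqrt_one).symm]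
      exact Real.sqrt_le_sqrt (hε1 i (hmem hi).1 (hmem hi).2)
    have hφ2b : ∀ y ∈ Ioo (0:ℝ) 1,
        |(∑ j ∈ Finset.Icc 1 n, ((deriv (deriv (fun s => A s i j)) y * v y j
            + deriv (fun s => A s i j) y * deriv (fun s => v s j) y)
          + (deriv (fun s => A s i j) y * deriv (fun s => v s j) y
            + A y i j * deriv (deriv (fun s => v s j)) y)))
          - deriv (deriv (fun s => f s i)) y| ≤ DD n α B := by
      intro y hy
      have hyI := Ioo_subset_Icc_self hy
      have ht : ∀ j ∈ Finset.Icc 1 n, |(deriv (deriv (fun s => A s i j)) y * v y j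
            + deriv (fun s => A s i j) y * deriv (fun s => v s j) y)
          + (deriv (fun s => A s i j) y * deriv (fun s => v s j) y
            + A y i j * deriv (deriv (fun s => v s j)) y)|
          ≤ B*(B/α) + 2*(B*CC1 n α B) + B*CC2 n α B := by
        intro j hj
        have h1 : |deriv (deriv (fun s => A s i j)) y * v y j| ≤ B*(B/α) := by
          rw [abs_mul]
          exact mul_le_mul (hbA2 y hyI i hi j hj) (claim0' y hyI j hj) (abs_nonneg _) hB0.le
        have h2 : |deriv (fun s => A s i j) y * deriv (fun s => v s j) y|
            ≤ B*CC1 n α B := by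
          rw [abs_mul]
          exact mul_le_mul (hbA1 y hyI i hi j hj)
            (le_trans (hmax1 y hyI j hj) claim1) (abs_nonneg _) hB0.le
        have h3 : |A y i j * deriv (deriv (fun s => v s j)) y| ≤ B*CC2 n α B := by
          rw [abs_mul]
          exact mul_le_mul (hbA0 y hyI i hi j hj) (claim2 y hyI j hj) (abs_nonneg _) hB0.le
        calc |(deriv (deriv (fun s => A s i j)) y * v y j
            + deriv (fun s => A s i j) y * deriv (fun s => v s j) y)
          + (deriv (fun s => A s i j) y * deriv (fun s => v s j) y
            + A y i j * deriv (deriv (fun s => v s j)) y)|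
            ≤ |deriv (deriv (fun s => A s i j)) y * v y j
            + deriv (fun s => A s i j) y * deriv (fun s => v s j) y|
              + |deriv (fun s => A s i j) y * deriv (fun s => v s j) y
            + A y i j * deriv (deriv (fun s => v s j)) y| := abs_add_le _ _
          _ ≤ (|deriv (deriv (fun s => A s i j)) y * v y j|
              + |deriv (fun s => A s i j) y * deriv (fun s => v s j) y|)
              + (|deriv (fun s => A s i j) y * deriv (fun s => v s j) y|
              + |A y i j * deriv (deriv (fun s => v s j)) y|) := by
              have := abs_add_le (deriv (deriv (fun s => A s i j)) y * v y j)
                (deriv (fun s => A s i j) y * deriv (fun s => v s j) y)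
              have := abs_add_le (deriv (fun s => A s i j) y * deriv (fun s => v s j) y)
                (A y i j * deriv (deriv (fun s => v s j)) y)
              linarith
          _ ≤ B*(B/α) + 2*(B*CC1 n α B) + B*CC2 n α B := by linarith
      have hSb := sumbnd ht
      have hddf := hbf2 y hyI i hi
      unfold DD
      calc |(∑ j ∈ Finset.Icc 1 n, ((deriv (deriv (fun s => A s i j)) y * v y j
            + deriv (fun s => A s i j) y * deriv (fun s => v s j) y)
          + (deriv (fun s => A s i j) y * deriv (fun s => v s j) y
            + A y i j * deriv (deriv (fun s => v s j)) y)))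
          - deriv (deriv (fun s => f s i)) y|
          ≤ |∑ j ∈ Finset.Icc 1 n, ((deriv (deriv (fun s => A s i j)) y * v y j
            + deriv (fun s => A s i j) y * deriv (fun s => v s j) y)
          + (deriv (fun s => A s i j) y * deriv (fun s => v s j) y
            + A y i j * deriv (deriv (fun s => v s j)) y))|
            + |deriv (deriv (fun s => f s i)) y| := abs_sub _ _
        _ ≤ B + n*(B*(B/α) + 2*(B*CC1 n α B) + B*CC2 n α B) := by linarith
    have hland := landau (K2 := DD n α B / ε i) (hv2d i hi) (hv3c i hi) hsq0 hsq1
      (fun y hy => claim2 y hy i hi)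
      (fun y hy => ⟨_, hz2 i hi y hy, by
        rw [abs_div, abs_of_pos hεi]
        gcongr
        exact hφ2b y hy⟩)
      x hx
    have h7 : Real.sqrt (ε i) * (DD n α B / ε i) = DD n α B / Real.sqrt (ε i) := by
      have hms := Real.mul_self_sqrt hεi.le
      have hsne : Real.sqrt (ε i) ≠ 0 := ne_of_gt hsq0
      field_simp
      linear_combination DD n α B * hms
    have h8 : 2*CC2 n α B/Real.sqrt (ε i) + DD n α B/Real.sqrt (ε i)
        = (2*CC2 n α B + DD n α B)/Real.sqrt (ε i) := (add_div _ _ _).symm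
    rw [h7] at hland
    linarith
  intro x hx i hi
  exact ⟨claim0' x hx i hi, le_trans (hmax1 x hx i hi) claim1, claim2 x hx i hi,
    claim3 x hx i hi⟩

noncomputable def vnorm (n : ℕ) (V : ℕ → ℝ) : ℝ := ⨆ i ∈ Finset.Icc 1 n, |V i|

noncomputable def Lop (n : ℕ) (ε : ℕ → ℝ) (A : ℝ → ℕ → ℕ → ℝ)
    (ψ : ℝ → ℕ → ℝ) (x : ℝ) (i : ℕ) : ℝ :=
  -(ε i) * iteratedDeriv 2 (fun t => ψ t i) x + ∑ j ∈ Finset.Icc 1 n, A x i j * ψ x j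

theorem stmt4
    (n : ℕ) (hn : 1 ≤ n)
    (A : ℝ → ℕ → ℕ → ℝ)
    (hAc : ∀ i j, 1 ≤ i → i ≤ n → 1 ≤ j → j ≤ n →
      ContinuousOn (fun x => A x i j) (Set.Icc 0 1))
    (hAsm : ∀ i j, 1 ≤ i → i ≤ n → 1 ≤ j → j ≤ n → ContDiff ℝ 3 (fun x => A x i j))
    (hAdiag : ∀ x ∈ Set.Icc (0:ℝ) 1, ∀ i, 1 ≤ i → i ≤ n →
      ∑ j ∈ (Finset.Icc 1 n).erase i, |A x i j| < A x i i)
    (hAoff : ∀ x ∈ Set.Icc (0:ℝ) 1, ∀ i j, 1 ≤ i → i ≤ n → 1 ≤ j → j ≤ n → i ≠ j → A x i j ≤ 0)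
    (α : ℝ) (hα0 : 0 < α)
    (hα : ∀ x ∈ Set.Icc (0:ℝ) 1, ∀ i, 1 ≤ i → i ≤ n → α < ∑ j ∈ Finset.Icc 1 n, A x i j)
    (f : ℝ → ℕ → ℝ)
    (hf : ∀ i, 1 ≤ i → i ≤ n → ContDiff ℝ 3 (fun t => f t i)) :
    ∃ C > 0,
      ∀ ε : ℕ → ℝ,
      (∀ i, 1 ≤ i → i ≤ n → 0 < ε i) →
      (∀ i, 1 ≤ i → i ≤ n → ε i ≤ 1) →
      (∀ i j, 1 ≤ i → i < j → j ≤ n → ε i < ε j) →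
      (∀ i, 1 ≤ i → i ≤ n → Real.sqrt (ε i) ≤ Real.sqrt α / 4) →
      ∀ v : ℝ → ℕ → ℝ,
      (∀ i, 1 ≤ i → i ≤ n → ContDiff ℝ 3 (fun t => v t i)) →
      (∀ y ∈ Set.Ioo (0:ℝ) 1, ∀ i, 1 ≤ i → i ≤ n → Lop n ε A v y i = f y i) →
      (∀ i, 1 ≤ i → i ≤ n → ∑ j ∈ Finset.Icc 1 n, A 0 i j * v 0 j = f 0 i) →
      (∀ i, 1 ≤ i → i ≤ n → ∑ j ∈ Finset.Icc 1 n, A 1 i j * v 1 j = f 1 i) →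
      ∀ k : ℕ, k ≤ 3 → ∀ i, 1 ≤ i → i ≤ n → ∀ x ∈ Set.Icc (0:ℝ) 1,
        |iteratedDeriv k (fun t => v t i) x| ≤ C * (1 + ε i ^ (1 - (k : ℝ) / 2)) := by
  have hmem : ∀ {i : ℕ}, i ∈ Finset.Icc 1 n → 1 ≤ i ∧ i ≤ n := fun h => Finset.mem_Icc.mp h
  -- a uniform bound B for A, f and their derivatives
  set g : ℝ → ℝ := fun x =>
    (∑ i ∈ Finset.Icc 1 n, ∑ j ∈ Finset.Icc 1 n,
      (|A x i j| + |deriv (fun t => A t i j) x| + |deriv (deriv (fun t => A t i j)) x|))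
    + ∑ i ∈ Finset.Icc 1 n, (|f x i| + |deriv (deriv (fun t => f t i)) x|) with hgdef
  have hA3 : ∀ i ∈ Finset.Icc 1 n, ∀ j ∈ Finset.Icc 1 n, ContDiff ℝ 3 (fun x => A x i j) :=
    fun i hi j hj => hAsm i j (hmem hi).1 (hmem hi).2 (hmem hj).1 (hmem hj).2
  have hf3 : ∀ i ∈ Finset.Icc 1 n, ContDiff ℝ 3 (fun t => f t i) :=
    fun i hi => hf i (hmem hi).1 (hmem hi).2
  have hgc : Continuous g := by
    apply Continuous.add
    · apply continuous_finset_sum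
      intro i hi
      apply continuous_finset_sum
      intro j hj
      exact (((hA3 i hi j hj).continuous.abs).add
        ((d3_cd2 (hA3 i hi j hj)).continuous.abs)).add
        ((d2_cd1 (d3_cd2 (hA3 i hi j hj))).continuous.abs)
    · apply continuous_finset_sum
      intro i hi
      exact ((hf3 i hi).continuous.abs).add
        ((d2_cd1 (d3_cd2 (hf3 i hi))).continuous.abs)
  obtain ⟨B0, hB0b⟩ := isCompact_Icc.exists_bound_of_continuousOn
    (hgc.continuousOn : ContinuousOn g (Icc (0:ℝ) 1))
  set B := max B0 1 with hBdef
  have hB1 : (1:ℝ) ≤ B := le_max_right _ _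
  have hB0 : (0:ℝ) < B := by linarith
  have hgB : ∀ x ∈ Icc (0:ℝ) 1, g x ≤ B := by
    intro x hx
    have h1 : g x ≤ |g x| := le_abs_self _
    have h2 : |g x| ≤ B0 := by
      have := hB0b x hx
      rwa [Real.norm_eq_abs] at this
    have h3 : B0 ≤ B := le_max_left _ _
    linarith
  have htermsA : ∀ x ∈ Icc (0:ℝ) 1, ∀ i ∈ Finset.Icc 1 n, ∀ j ∈ Finset.Icc 1 n,
      |A x i j| + |deriv (fun t => A t i j) x| + |deriv (deriv (fun t => A t i j)) x| ≤ B := by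
    intro x hx i hi j hj
    have h1 : |A x i j| + |deriv (fun t => A t i j) x| + |deriv (deriv (fun t => A t i j)) x|
        ≤ ∑ j' ∈ Finset.Icc 1 n,
          (|A x i j'| + |deriv (fun t => A t i j') x| + |deriv (deriv (fun t => A t i j')) x|) :=
      Finset.single_le_sum (f := fun j' => |A x i j'| + |deriv (fun t => A t i j') x|
        + |deriv (deriv (fun t => A t i j')) x|) (fun j' _ => by positivity) hj
    have h2 : ∑ j' ∈ Finset.Icc 1 n,
          (|A x i j'| + |deriv (fun t => A t i j') x| + |deriv (deriv (fun t => A t i j')) x|)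
        ≤ ∑ i' ∈ Finset.Icc 1 n, ∑ j' ∈ Finset.Icc 1 n,
          (|A x i' j'| + |deriv (fun t => A t i' j') x|
            + |deriv (deriv (fun t => A t i' j')) x|) :=
      Finset.single_le_sum (f := fun i' => ∑ j' ∈ Finset.Icc 1 n, (|A x i' j'|
        + |deriv (fun t => A t i' j') x| + |deriv (deriv (fun t => A t i' j')) x|))
        (fun i' _ => Finset.sum_nonneg (fun j' _ => by positivity)) hi
    have h3 : (0:ℝ) ≤ ∑ i' ∈ Finset.Icc 1 n, (|f x i'| + |deriv (deriv (fun t => f t i')) x|) :=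
      Finset.sum_nonneg (fun i' _ => by positivity)
    have h4 := hgB x hx
    rw [hgdef] at h4
    beta_reduce at h4
    linarith
  have htermsf : ∀ x ∈ Icc (0:ℝ) 1, ∀ i ∈ Finset.Icc 1 n,
      |f x i| + |deriv (deriv (fun t => f t i)) x| ≤ B := by
    intro x hx i hi
    have h1 : |f x i| + |deriv (deriv (fun t => f t i)) x|
        ≤ ∑ i' ∈ Finset.Icc 1 n, (|f x i'| + |deriv (deriv (fun t => f t i')) x|) :=
      Finset.single_le_sum (f := fun i' => |f x i'| + |deriv (deriv (fun t => f t i')) x|)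
        (fun i' _ => by positivity) hi
    have h3 : (0:ℝ) ≤ ∑ i' ∈ Finset.Icc 1 n, ∑ j' ∈ Finset.Icc 1 n,
          (|A x i' j'| + |deriv (fun t => A t i' j') x|
            + |deriv (deriv (fun t => A t i' j')) x|) :=
      Finset.sum_nonneg (fun i' _ => Finset.sum_nonneg (fun j' _ => by positivity))
    have h4 := hgB x hx
    rw [hgdef] at h4
    beta_reduce at h4
    linarith
  have hbA0 : ∀ x ∈ Icc (0:ℝ) 1, ∀ i ∈ Finset.Icc 1 n, ∀ j ∈ Finset.Icc 1 n, |A x i j| ≤ B := by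
    intro x hx i hi j hj
    have := htermsA x hx i hi j hj
    have a1 := abs_nonneg (deriv (fun t => A t i j) x)
    have a2 := abs_nonneg (deriv (deriv (fun t => A t i j)) x)
    linarith
  have hbA1 : ∀ x ∈ Icc (0:ℝ) 1, ∀ i ∈ Finset.Icc 1 n, ∀ j ∈ Finset.Icc 1 n,
      |deriv (fun t => A t i j) x| ≤ B := by
    intro x hx i hi j hj
    have := htermsA x hx i hi j hj
    have a1 := abs_nonneg (A x i j)
    have a2 := abs_nonneg (deriv (deriv (fun t => A t i j)) x)
    linarith
  have hbA2 : ∀ x ∈ Icc (0:ℝ) 1, ∀ i ∈ Finset.Icc 1 n, ∀ j ∈ Finset.Icc 1 n,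
      |deriv (deriv (fun t => A t i j)) x| ≤ B := by
    intro x hx i hi j hj
    have := htermsA x hx i hi j hj
    have a1 := abs_nonneg (A x i j)
    have a2 := abs_nonneg (deriv (fun t => A t i j) x)
    linarith
  have hbf0 : ∀ x ∈ Icc (0:ℝ) 1, ∀ i ∈ Finset.Icc 1 n, |f x i| ≤ B := by
    intro x hx i hi
    have := htermsf x hx i hi
    have a1 := abs_nonneg (deriv (deriv (fun t => f t i)) x)
    linarith
  have hbf2 : ∀ x ∈ Icc (0:ℝ) 1, ∀ i ∈ Finset.Icc 1 n,
      |deriv (deriv (fun t => f t i)) x| ≤ B := by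
    intro x hx i hi
    have := htermsf x hx i hi
    have a1 := abs_nonneg (f x i)
    linarith
  -- the constant
  set M : ℝ := max (max (B/α) (CC1 n α B)) (max (CC2 n α B) (2*CC2 n α B + DD n α B)) with hMdef
  have hM0 : 0 ≤ M := le_trans (by positivity : (0:ℝ) ≤ B/α)
    (le_trans (le_max_left _ _) (le_max_left _ _))
  refine ⟨M + 1, by linarith, ?_⟩
  intro ε hε0 hε1 _ _ v hv hLv hbc0 hbc1
  have hLv' : ∀ y ∈ Ioo (0:ℝ) 1, ∀ i, 1 ≤ i → i ≤ n →
      -(ε i) * iteratedDeriv 2 (fun t => v t i) y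
        + ∑ j ∈ Finset.Icc 1 n, A y i j * v y j = f y i := by
    intro y hy i h1 h2
    have := hLv y hy i h1 h2
    unfold Lop at this
    exact this
  have hcore := core n hn A hAsm hAoff α hα0 hα f hf B hB1 hbA0 hbA1 hbA2 hbf0 hbf2
    ε hε0 hε1 v hv hLv' hbc0 hbc1
  intro k hk i h1i hini x hx
  have hiS : i ∈ Finset.Icc 1 n := Finset.mem_Icc.mpr ⟨h1i, hini⟩
  obtain ⟨c0, c1, c2, c3⟩ := hcore x hx i hiS
  have hεi : 0 < ε i := hε0 i h1i hini
  have hq1 : B/α ≤ M := le_trans (le_max_left _ _) (le_max_left _ _)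
  have hq2 : CC1 n α B ≤ M := le_trans (le_max_right _ _) (le_max_left _ _)
  have hq3 : CC2 n α B ≤ M := le_trans (le_max_left _ _) (le_max_right _ _)
  have hq4 : 2*CC2 n α B + DD n α B ≤ M := le_trans (le_max_right _ _) (le_max_right _ _)
  interval_cases k
  · -- k = 0
    rw [iteratedDeriv_zero]
    have hexp : (1 - (0:ℕ)/2 : ℝ) = 1 := by norm_num
    have he0 : ((0:ℕ):ℝ) = 0 := by norm_num
    rw [show (1 - ((0:ℕ):ℝ)/2) = (1:ℝ) by norm_num, Real.rpow_one]
    have : |v x i| ≤ M + 1 := by linarith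
    nlinarith [hεi.le, hM0]
  · -- k = 1
    rw [iteratedDeriv_one]
    rw [show (1 - ((1:ℕ):ℝ)/2) = (1/2:ℝ) by norm_num]
    have hrnn : 0 ≤ ε i ^ ((1/2):ℝ) := Real.rpow_nonneg hεi.le _
    have : |deriv (fun t => v t i) x| ≤ M + 1 := by linarith
    nlinarith [hM0]
  · -- k = 2
    rw [iter2]
    rw [show (1 - ((2:ℕ):ℝ)/2) = (0:ℝ) by norm_num, Real.rpow_zero]
    have : |deriv (deriv (fun t => v t i)) x| ≤ M + 1 := by linarith
    linarith
  · -- k = 3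
    rw [iter3]
    rw [show (1 - ((3:ℕ):ℝ)/2) = (-(1/2):ℝ) by norm_num]
    have hsq0 : 0 < Real.sqrt (ε i) := Real.sqrt_pos.mpr hεi
    have hrw : ε i ^ ((-(1/2)):ℝ) = (Real.sqrt (ε i))⁻¹ := by
      rw [Real.rpow_neg hεi.le, Real.sqrt_eq_rpow]
    rw [hrw]
    have h5 : (2*CC2 n α B + DD n α B)/Real.sqrt (ε i) ≤ (M+1)/Real.sqrt (ε i) := by
      exact (div_le_div_iff_of_pos_right hsq0).mpr (by linarith)
    have h6 : (M+1)/Real.sqrt (ε i) = (M+1) * (Real.sqrt (ε i))⁻¹ := div_eq_mul_inv _ _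
    have h7 : 0 ≤ (Real.sqrt (ε i))⁻¹ := by positivity
    nlinarith [c3, h5, h6, h7, hM0]
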